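/- The center of R = R_n(K,J) equals Ann R + (J ∩ C(K))·E, where E is the identity matrix of order n; that is, a matrix is central in R if and only if it is a sum of an annihilator element a e_{n,1} with a ∈ Ann_K(J) and a scalar matrix cE with c ∈ J ∩ C(K). -/

import Mathlib

/-- Membership in `R = R_n(K,J)`: entries on and above the main diagonal lie in `J`. -/
def Rmem {K : Type*} [Ring K] {n : ℕ} (J : AddSubgroup K)
    (M : Matrix (Fin n) (Fin n) K) : Prop :=
  ∀ i j : Fin n, i ≤ j → M i j ∈ J

/-- The center of `R = R_n(K,J)` equals `Ann R + (J ∩ C(K))·E`: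
a matrix `M ∈ R` is central iff `M = a e_{n,1} + c E` with `a ∈ Ann_K(J)` and
`c ∈ J ∩ C(K)`. -/
theorem center_of_R {K : Type*} [Ring K] {n : ℕ} (hn : 3 ≤ n)
    (J : AddSubgroup K)
    (hJl : ∀ r : K, ∀ y ∈ J, r * y ∈ J) (hJr : ∀ r : K, ∀ y ∈ J, y * r ∈ J) :
    ∀ M : Matrix (Fin n) (Fin n) K, Rmem J M →
      ((∀ X : Matrix (Fin n) (Fin n) K, Rmem J X → M * X = X * M) ↔
        ∃ a c : K, (∀ y ∈ J, a * y = 0 ∧ y * a = 0) ∧ c ∈ J ∧ (∀ b : K, c * b = b * c) ∧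
          M = Matrix.single ⟨n - 1, by omega⟩ ⟨0, by omega⟩ a +
              c • (1 : Matrix (Fin n) (Fin n) K)) := by
  intro M hM
  have i0 : Fin n := ⟨0, by omega⟩
  have hn1 : n - 1 < n := by omega
  have h0n : 0 < n := by omega
  set iN : Fin n := ⟨n - 1, hn1⟩ with hiN
  set iO : Fin n := ⟨0, h0n⟩ with hiO
  have hNne0 : iN ≠ iO := by
    simp only [hiN, hiO, Fin.mk.injEq, ne_eq]
    omega
  constructor
  · intro h
    -- strictly-lower-triangular test matrices belong to R
    have hlow : ∀ (k l : Fin n), (l : ℕ) < (k : ℕ) → ∀ y : K,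
        Rmem J (Matrix.single k l y) := by
      intro k l hkl y i j hij
      rw [Matrix.single_apply_of_ne]
      · exact J.zero_mem
      · rintro ⟨rfl, rfl⟩
        exact absurd (Fin.le_def.mp hij) (by omega)
    -- test matrices with entry in J belong to R
    have hup : ∀ (k l : Fin n) (y : K), y ∈ J → Rmem J (Matrix.single k l y) := by
      intro k l y hy i j _
      by_cases hk : k = i ∧ l = j
      · obtain ⟨rfl, rfl⟩ := hk; simpa using hy
      · rw [Matrix.single_apply_of_ne _ _ _ _ _ hk]; exact J.zero_mem
    have key : ∀ (k l : Fin n) (y : K), Rmem J (Matrix.single k l y) →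
        ∀ i j : Fin n,
          (M * Matrix.single k l y) i j = (Matrix.single k l y * M) i j := by
      intro k l y hX i j
      rw [h _ hX]
    -- off-diagonal entries in columns ≥ 1 vanish
    have offcol : ∀ (k i : Fin n), 0 < (k : ℕ) → i ≠ k → M i k = 0 := by
      intro k i hk hik
      have := key k iO 1 (hlow k iO (by simpa [hiO] using hk) 1) i iO
      rw [Matrix.mul_single_apply_same,
        Matrix.single_mul_apply_of_ne _ _ _ _ _ hik] at this
      simpa using this
    -- off-diagonal entries in rows ≤ n-2 vanish
    have offrow : ∀ (l j : Fin n), (l : ℕ) < n - 1 → j ≠ l → M l j = 0 := by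
      intro l j hl hjl
      have := key iN l 1 (hlow iN l (by simpa [hiN] using hl) 1) iN j
      rw [Matrix.single_mul_apply_same,
        Matrix.mul_single_apply_of_ne _ _ _ _ _ hjl] at this
      simpa using this.symm
    -- diagonal relation
    have diag : ∀ (k l : Fin n), (l : ℕ) < (k : ℕ) → ∀ y : K,
        M k k * y = y * M l l := by
      intro k l hkl y
      have := key k l y (hlow k l hkl y) k l
      rwa [Matrix.mul_single_apply_same,
        Matrix.single_mul_apply_same] at this
    have hNgt0 : (iO : ℕ) < (iN : ℕ) := by simp [hiN, hiO]; omega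
    have hdiag_eq : ∀ k : Fin n, M k k = M iO iO := by
      intro k
      by_cases hk : k = iO
      · rw [hk]
      · have hk' : (iO : ℕ) < (k : ℕ) := by
          have : (k : ℕ) ≠ 0 := fun hc => hk (Fin.ext (by simpa [hiO] using hc))
          simp only [hiO]; omega
        simpa using diag k iO hk' 1
    refine ⟨M iN iO, M iO iO, ?_, hM iO iO le_rfl, ?_, ?_⟩
    · intro y hy
      constructor
      · have := key iO iO y (hup iO iO y hy) iN iO
        rwa [Matrix.mul_single_apply_same,
          Matrix.single_mul_apply_of_ne _ _ _ _ _ hNne0] at this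
      · have := key iO iN y (hup iO iN y hy) iO iO
        rw [Matrix.single_mul_apply_same,
          Matrix.mul_single_apply_of_ne _ _ _ _ _ hNne0.symm] at this
        exact this.symm
    · intro b
      have h1 := diag iN iO hNgt0 b
      rw [hdiag_eq iN] at h1
      exact h1
    · ext i j
      by_cases hij : i = j
      · subst hij
        have hne : ¬(iN = i ∧ iO = i) := by
          rintro ⟨rfl, hc⟩; exact hNne0 hc.symm
        rw [Matrix.add_apply, Matrix.single_apply_of_ne _ _ _ _ _ hne,
          Matrix.smul_apply, Matrix.one_apply_eq, zero_add, smul_eq_mul, mul_one]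
        exact hdiag_eq i
      · rw [Matrix.add_apply, Matrix.smul_apply, Matrix.one_apply_ne hij,
          smul_eq_mul, mul_zero, add_zero]
        by_cases h2 : i = iN ∧ j = iO
        · obtain ⟨rfl, rfl⟩ := h2
          rw [Matrix.single_apply_same]
        · have hne : ¬(iN = i ∧ iO = j) := by
            rintro ⟨rfl, rfl⟩; exact h2 ⟨rfl, rfl⟩
          rw [Matrix.single_apply_of_ne _ _ _ _ _ hne]
          by_cases hj : (j : ℕ) = 0
          · have hjO : j = iO := Fin.ext (by simpa [hiO] using hj)
            have hiNe : i ≠ iN := fun hc => h2 ⟨hc, hjO⟩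
            have hilt : (i : ℕ) < n - 1 := by
              have h1 : (i : ℕ) ≠ n - 1 := fun hc => hiNe (Fin.ext (by simpa [hiN] using hc))
              have := i.isLt
              omega
            exact offrow i j hilt (Ne.symm hij)
          · exact offcol j i (by omega) hij
  · rintro ⟨a, c, hann, hcJ, hcC, rfl⟩
    intro X hX
    have h1 : Matrix.single iN iO a * X = 0 := by
      ext i j
      by_cases hi : i = iN
      · subst hi
        rw [Matrix.single_mul_apply_same, Matrix.zero_apply]
        exact (hann _ (hX iO j (Fin.le_def.mpr (by simp [hiO])))).1
      · rw [Matrix.single_mul_apply_of_ne _ _ _ _ _ hi, Matrix.zero_apply]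
    have h2 : X * Matrix.single iN iO a = 0 := by
      ext i j
      by_cases hj : j = iO
      · subst hj
        rw [Matrix.mul_single_apply_same, Matrix.zero_apply]
        exact (hann _ (hX i iN (Fin.le_def.mpr (by simp [hiN]; omega)))).2
      · rw [Matrix.mul_single_apply_of_ne _ _ _ _ _ hj, Matrix.zero_apply]
    have h3 : (c • (1 : Matrix (Fin n) (Fin n) K)) * X = X * (c • 1) := by
      ext i j
      rw [smul_mul_assoc, one_mul, Matrix.smul_apply, smul_eq_mul, Matrix.mul_apply]
      rw [Finset.sum_eq_single j]
      · rw [Matrix.smul_apply, Matrix.one_apply_eq, smul_eq_mul, mul_one]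
        exact hcC (X i j)
      · intro b _ hb
        rw [Matrix.smul_apply, Matrix.one_apply_ne hb, smul_eq_mul, mul_zero, mul_zero]
      · intro hj; exact absurd (Finset.mem_univ j) hj
    rw [add_mul, mul_add, h1, h2, zero_add, zero_add, h3]
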